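/- Let a > 0 and let h : [t₀,t₁] → ℝ be a C² function with h > 0 on [t₀,t₁], satisfying h''(t) = (1 − h'(t)²)/(a·h(t)) for all t ∈ [t₀,t₁], and suppose |h'(t₀)| < 1. Then |h'(t)| < 1 for all t ∈ [t₀,t₁], and h(t) ≥ h(t₀)·(1 − h'(t₀)²)^{a/2} for all t ∈ [t₀,t₁]. -/

import Mathlib

/-- A priori bounds for solutions of `h'' = (1 - h'²)/(a·h)`: if `|h'(t₀)| < 1`
then `|h'| < 1` throughout, and `h ≥ h(t₀)·(1 - h'(t₀)²)^{a/2}`. -/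
theorem ode_apriori_bounds (a t₀ t₁ : ℝ) (ha : 0 < a) (ht : t₀ ≤ t₁)
    (h h' h'' : ℝ → ℝ)
    (hd1 : ∀ t ∈ Set.Icc t₀ t₁, HasDerivAt h (h' t) t)
    (hd2 : ∀ t ∈ Set.Icc t₀ t₁, HasDerivAt h' (h'' t) t)
    (hpos : ∀ t ∈ Set.Icc t₀ t₁, 0 < h t)
    (hode : ∀ t ∈ Set.Icc t₀ t₁, h'' t = (1 - h' t ^ 2) / (a * h t))
    (hinit : |h' t₀| < 1) :
    ∀ t ∈ Set.Icc t₀ t₁,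
      |h' t| < 1 ∧ h t₀ * (1 - h' t₀ ^ 2) ^ (a / 2 : ℝ) ≤ h t := by
  set p : ℝ := 2 / a with hp
  have hp0 : 0 < p := by positivity
  set F : ℝ → ℝ := fun s => h s ^ p * (1 - h' s ^ 2) with hF
  have ht0I : t₀ ∈ Set.Icc t₀ t₁ := ⟨le_refl _, ht⟩
  have hFd : ∀ s ∈ Set.Icc t₀ t₁, HasDerivAt F 0 s := by
    intro s hs
    have h1 := hd1 s hs
    have h2 := hd2 s hs
    have hhs := hpos s hs
    have hd : HasDerivAt (fun x => h x ^ p) (h' s * p * h s ^ (p - 1)) s :=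
      h1.rpow_const (Or.inl hhs.ne')
    have hd' : HasDerivAt (fun x => 1 - h' x ^ 2) (-(2 * h' s ^ 1 * h'' s)) s := by
      simpa using (h2.pow 2).const_sub 1
    have hm := hd.mul hd'
    convert hm using 1
    · rfl
    · rfl
    · rfl
    rw [hode s hs]
    have hsplit : h s ^ p = h s ^ (p - 1) * h s := by
      rw [← Real.rpow_add_one hhs.ne' (p - 1)]
      norm_num
    rw [hsplit]
    have ha' : a ≠ 0 := ha.ne'
    have hh' : h s ≠ 0 := hhs.ne'
    field_simp [hp]
    have hap : a * p = 2 := by rw [hp]; field_simp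
    linear_combination (-(h' s * h s ^ (p - 1) - h' s ^ 3 * h s ^ (p - 1))) * hap
  have hFconst : ∀ t ∈ Set.Icc t₀ t₁, F t = F t₀ := by
    apply constant_of_has_deriv_right_zero
    · exact fun s hs => (hFd s hs).continuousAt.continuousWithinAt
    · exact fun s hs => ((hFd s (Set.mem_Icc_of_Ico hs)).hasDerivWithinAt)
  have h0pos := hpos t₀ ht0I
  have hsq0 : h' t₀ ^ 2 < 1 := by
    have := abs_lt.mp hinit
    nlinarith
  have hc : 0 < F t₀ := by
    have : (0:ℝ) < h t₀ ^ p := Real.rpow_pos_of_pos h0pos p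
    have h1 : 0 < 1 - h' t₀ ^ 2 := by linarith
    exact mul_pos this h1
  intro t htI
  have hFt := hFconst t htI
  have htpos := hpos t htI
  have htp : (0:ℝ) < h t ^ p := Real.rpow_pos_of_pos htpos p
  have hsq : h' t ^ 2 < 1 := by
    by_contra hcon
    push_neg at hcon
    have : F t ≤ 0 := by
      have : 1 - h' t ^ 2 ≤ 0 := by linarith
      exact mul_nonpos_of_nonneg_of_nonpos htp.le this
    linarith [hFt ▸ this]
  constructor
  · exact abs_lt.mpr ⟨by nlinarith, by nlinarith⟩
  · have hle : F t₀ ≤ h t ^ p := by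
      have h1 : 1 - h' t ^ 2 ≤ 1 := by nlinarith [sq_nonneg (h' t)]
      calc F t₀ = h t ^ p * (1 - h' t ^ 2) := hFt.symm
        _ ≤ h t ^ p * 1 := by exact mul_le_mul_of_nonneg_left h1 htp.le
        _ = h t ^ p := mul_one _
    have hmono : F t₀ ^ (a / 2 : ℝ) ≤ (h t ^ p) ^ (a / 2 : ℝ) :=
      Real.rpow_le_rpow hc.le hle (by positivity)
    have hp1 : p * (a / 2) = 1 := by rw [hp]; field_simp
    have hr : (h t ^ p) ^ (a / 2 : ℝ) = h t := by
      rw [← Real.rpow_mul htpos.le, hp1, Real.rpow_one]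
    have hl : F t₀ ^ (a / 2 : ℝ) = h t₀ * (1 - h' t₀ ^ 2) ^ (a / 2 : ℝ) := by
      have h1 : (0:ℝ) ≤ h t₀ ^ p := (Real.rpow_pos_of_pos h0pos p).le
      rw [hF]
      rw [Real.mul_rpow h1 (by linarith : (0:ℝ) ≤ 1 - h' t₀ ^ 2)]
      rw [← Real.rpow_mul h0pos.le, hp1, Real.rpow_one]
    rw [← hr, ← hl]
    exact hmono
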